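/- Let X be the nonsingular projective toric 4-fold (the nonsingular toric Fano 4-fold of type M_5) whose fan Σ has primitive generators G(Σ) = {x_1,…,x_8} and primitive relations x_1 + x_8 = x_5, x_4 + x_5 = x_7, x_6 + x_7 = x_1, x_1 + x_2 + x_3 = x_6, x_2 + x_3 + x_5 = x_6 + x_8, x_2 + x_3 + x_7 = 0, x_4 + x_6 + x_8 = 0. Then X admits no totally nondegenerate finite morphism from an abelian surface. -/

import Mathlib

open Finset

/-- An abelian surface over `ℂ`, recorded abstractly through its group `Div` of
divisor classes modulo algebraic equivalence, the intersection pairing, and the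
effectivity and ampleness predicates.  The listed axioms are standard facts
about divisors on an abelian surface. -/
structure AbelianSurface (Div : Type) [AddCommGroup Div] : Type where
  /-- the intersection pairing `D.E` on the abelian surface -/
  inter : Div →+ Div →+ ℤ
  inter_comm : ∀ D E : Div, inter D E = inter E D
  /-- `Effective D` ↔ `D` is the class of a (nonzero or zero) effective divisor -/
  Effective : Div → Prop
  effective_zero : Effective 0
  effective_add : ∀ {D E : Div}, Effective D → Effective E → Effective (D + E)
  /-- on an abelian surface two effective divisors intersect nonnegatively -/
  inter_nonneg_of_effective : ∀ {D E : Div}, Effective D → Effective E → 0 ≤ inter D E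
  /-- `Ample D` ↔ `D` is the class of an ample divisor -/
  Ample : Div → Prop
  /-- on an abelian surface an effective divisor with positive self-intersection is ample -/
  ample_of_effective_of_sq_pos : ∀ {D : Div}, Effective D → 0 < inter D D → Ample D
  /-- an ample divisor meets every nonzero effective divisor positively -/
  inter_pos_of_ample : ∀ {D E : Div}, Ample D → Effective E → E ≠ 0 → 0 < inter D E
  /-- an ample divisor has positive self-intersection -/
  sq_pos_of_ample : ∀ {D : Div}, Ample D → 0 < inter D D

/-- A complete nonsingular toric 4-fold `X`, presented by the primitive
generators `x_1, …, x_n ∈ N = ℤ⁴` of its fan `Σ` together with the predicate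
`IsCone` recording which subsets of the rays span a cone of `Σ`. -/
structure ToricFourfold (n : ℕ) : Type where
  /-- the set `G(Σ)` of primitive generators `x_1, …, x_n` of `Σ` in `N = ℤ⁴` -/
  gen : Fin n → Fin 4 → ℤ
  gen_injective : Function.Injective gen
  /-- `IsCone S` ↔ the rays `{x_i : i ∈ S}` span a cone of `Σ` -/
  IsCone : Finset (Fin n) → Prop
  isCone_empty : IsCone ∅
  isCone_singleton : ∀ i : Fin n, IsCone {i}
  isCone_mono : ∀ {S T : Finset (Fin n)}, S ⊆ T → IsCone T → IsCone S
  /-- nonsingularity: the generators of each cone form part of a `ℤ`-basis of `N` -/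
  nonsingular : ∀ {S : Finset (Fin n)}, IsCone S →
    ∃ b : Module.Basis (Fin 4) ℤ (Fin 4 → ℤ), ∃ ι : {x // x ∈ S} → Fin 4,
      Function.Injective ι ∧ ∀ i : {x // x ∈ S}, gen i.1 = b (ι i)
  /-- completeness: the cones of `Σ` cover `N_ℚ = ℚ⁴` -/
  complete : ∀ v : Fin 4 → ℚ, ∃ S : Finset (Fin n), IsCone S ∧
    ∃ c : Fin n → ℚ, (∀ i, 0 ≤ c i) ∧ (∀ i, i ∉ S → c i = 0) ∧
      ∀ k, v k = ∑ i, c i * (gen i k : ℚ)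

/-- A primitive collection of the fan of `X` (in the sense of Batyrev):
a minimal subset of the set of rays not spanning a cone. -/
def ToricFourfold.IsPrimitiveCollection {n : ℕ} (X : ToricFourfold n)
    (P : Finset (Fin n)) : Prop :=
  ¬ X.IsCone P ∧ ∀ Q : Finset (Fin n), Q ⊂ P → X.IsCone Q

/-- An (equivariant) isomorphism of complete nonsingular toric 4-folds,
i.e. an isomorphism of the corresponding fans. -/
def ToricFourfold.Iso {m n : ℕ} (X : ToricFourfold m) (Y : ToricFourfold n) : Prop :=
  ∃ (e : Fin m ≃ Fin n) (g : Matrix (Fin 4) (Fin 4) ℤ), IsUnit g.det ∧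
    (∀ i, Y.gen (e i) = g.mulVec (X.gen i)) ∧
    ∀ S : Finset (Fin m), X.IsCone S ↔ Y.IsCone (S.image e)

/-- A projective nonsingular toric 4-fold: a complete nonsingular toric 4-fold
together with the predicate recording which `T_N`-invariant divisors
`∑ i, c i • D i` are ample, and (projectivity) an ample effective such divisor. -/
structure ProjToricFourfold (n : ℕ) : Type extends ToricFourfold n where
  /-- `IsAmple c` ↔ the `T_N`-invariant divisor `∑ i, c i • D i` is ample on `X` -/
  IsAmple : (Fin n → ℤ) → Prop
  /-- projectivity: there is an ample effective `T_N`-invariant divisor -/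
  exists_ample : ∃ c : Fin n → ℤ, (∀ i, 0 ≤ c i) ∧ IsAmple c

/-- `X` is Fano: the anticanonical divisor `∑ i, D i` is ample. -/
def ProjToricFourfold.IsFano {n : ℕ} (X : ProjToricFourfold n) : Prop :=
  X.IsAmple fun _ => 1

/-- A totally nondegenerate finite morphism `φ : A → X` from an abelian surface
`A` to a complete nonsingular toric 4-fold `X`, recorded through the pullbacks
`C i = φ*(D i)` of the `T_N`-invariant prime divisors `D 1, …, D n` of `X`:
total nondegeneracy says that each `D i` meets `φ(A)`, so that each `C i` is a
nonzero effective divisor on `A`. -/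
structure TNDMorphism {n : ℕ} (X : ToricFourfold n) {Div : Type} [AddCommGroup Div]
    (A : AbelianSurface Div) : Type where
  /-- the pullbacks `C i = φ*(D i)` -/
  C : Fin n → Div
  effective : ∀ i, A.Effective (C i)
  /-- total nondegeneracy: `D i ∩ φ(A) ≠ ∅`, so `C i` is a nonzero effective divisor -/
  ne_zero : ∀ i, C i ≠ 0
  /-- if `{x i, x j}` spans no cone of `Σ` then `D i ∩ D j = ∅`, hence the
  pullbacks have intersection number zero -/
  inter_eq_zero : ∀ {i j : Fin n}, i ≠ j → ¬ X.IsCone {i, j} → A.inter (C i) (C j) = 0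
  /-- for every `m ∈ M` the pullback of the principal divisor
  `div 𝐞(m) = ∑ i ⟨m, x i⟩ D i` is (algebraically equivalent to) zero -/
  principal_rel : ∀ m : Fin 4 → ℤ, ∑ i, (∑ k, m k * X.gen i k) • C i = 0

/-- A totally nondegenerate finite morphism to a projective nonsingular toric
4-fold; finiteness of `φ` moreover makes pullbacks of ample divisors ample. -/
structure TNDMorphismProj {n : ℕ} (X : ProjToricFourfold n) {Div : Type} [AddCommGroup Div]
    (A : AbelianSurface Div) : Type extends TNDMorphism X.toToricFourfold A where
  /-- the pullback of an ample divisor under the finite morphism `φ` is ample -/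
  pull_ample : ∀ c : Fin n → ℤ, X.IsAmple c → A.Ample (∑ i, c i • C i)

/-- `X` admits a totally nondegenerate finite morphism from an abelian surface. -/
def ProjToricFourfold.HasTND {n : ℕ} (X : ProjToricFourfold n) : Prop :=
  ∃ (Div : Type) (inst : AddCommGroup Div) (A : @AbelianSurface Div inst),
    Nonempty (@TNDMorphismProj n X Div inst A)

/-- A totally nondegenerate embedding `φ : A ↪ X` of an abelian surface into a
projective nonsingular toric 4-fold: a totally nondegenerate finite morphism
which is a closed embedding.  Besides the finite-morphism data we record the
intersection-theoretic data available for an embedded surface: the quadruple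
intersection numbers `quad i j k l = D i · D j · D k · D l` on `X`, the class
`[A] = ∑ k l, aClass k l • (D k · D l)` of `A` in the Chow group `A²(X)`, the
compatibility `(φ*D i)·(φ*D j) = D i · D j · [A]`, and Van de Ven's relation
`c₂(X)·[A] = [A]²` where `c₂(X) = ∑_{i<j} D i · D j` for a nonsingular complete
toric variety. -/
structure TNDEmbedding {n : ℕ} (X : ProjToricFourfold n) {Div : Type} [AddCommGroup Div]
    (A : AbelianSurface Div) : Type extends TNDMorphismProj X A where
  /-- the intersection numbers `D i · D j · D k · D l` on `X` -/
  quad : Fin n → Fin n → Fin n → Fin n → ℤ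
  /-- the coefficients of the class `[A] ∈ A²(X)` in terms of the classes `D k · D l` -/
  aClass : Fin n → Fin n → ℤ
  /-- for the embedded surface `A ⊂ X`, `(φ*D i)·(φ*D j) = D i · D j · [A]` -/
  inter_eq_quad : ∀ i j : Fin n,
    A.inter (C i) (C j) = ∑ k, ∑ l, aClass k l * quad i j k l
  /-- Van de Ven's relation `c₂(X)·[A] = [A]²` -/
  van_de_ven : ∑ i, ∑ j ∈ Finset.Ioi i, A.inter (C i) (C j) =
    ∑ k, ∑ l, ∑ k', ∑ l', aClass k l * aClass k' l' * quad k l k' l'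

/-- `X` admits a totally nondegenerate embedding of an abelian surface. -/
def ProjToricFourfold.HasTNDEmbedding {n : ℕ} (X : ProjToricFourfold n) : Prop :=
  ∃ (Div : Type) (inst : AddCommGroup Div) (A : @AbelianSurface Div inst),
    Nonempty (@TNDEmbedding n X Div inst A)

/-- `ψ : Y → X` is a 2-blow-up: an equivariant blow-up of `X` along a
`T_N`-invariant subvariety of codimension 2.  On fans this is the star
subdivision of the fan of `X` at a 2-dimensional cone `{x i, x j}`, the new ray
(indexed last) being generated by `x i + x j`. -/
def IsTwoBlowUp {m n : ℕ} (Y : ProjToricFourfold m) (X : ProjToricFourfold n) : Prop :=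
  ∃ h : m = n + 1, ∃ i j : Fin n, i ≠ j ∧ X.IsCone {i, j} ∧
    (∀ k : Fin n, Y.gen (finCongr h.symm k.castSucc) = X.gen k) ∧
    Y.gen (finCongr h.symm (Fin.last n)) = X.gen i + X.gen j ∧
    ∀ S : Finset (Fin n),
      (Y.IsCone (S.image fun k => finCongr h.symm k.castSucc) ↔
        X.IsCone S ∧ ¬ {i, j} ⊆ S) ∧
      (Y.IsCone (insert (finCongr h.symm (Fin.last n))
          (S.image fun k => finCongr h.symm k.castSucc)) ↔
        ¬ {i, j} ⊆ S ∧ X.IsCone (S ∪ {i, j}))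

/-- The fan of `X` splits (after a change of coordinates in `N = ℤ⁴`) as the
product of two 2-dimensional complete fans, i.e. `X ≅ X₁ × X₂` for nonsingular
complete toric surfaces `X₁`, `X₂`.  When `X` is moreover Fano, the two factors
are nonsingular toric del Pezzo surfaces. -/
def ProjToricFourfold.IsProductOfSurfaces {n : ℕ} (X : ProjToricFourfold n) : Prop :=
  ∃ g : Matrix (Fin 4) (Fin 4) ℤ, IsUnit g.det ∧
    ∃ σ : Fin n → Bool,
      (∀ i, σ i = true → g.mulVec (X.gen i) 2 = 0 ∧ g.mulVec (X.gen i) 3 = 0) ∧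
      (∀ i, σ i = false → g.mulVec (X.gen i) 0 = 0 ∧ g.mulVec (X.gen i) 1 = 0) ∧
      ∀ S : Finset (Fin n), X.IsCone S ↔
        (X.IsCone (S.filter fun i => σ i = true) ∧ X.IsCone (S.filter fun i => σ i = false))


private lemma exists_pc_aux {n : ℕ} (X : ToricFourfold n) :
    ∀ S : Finset (Fin n), ¬ X.IsCone S → ∃ P ⊆ S, X.IsPrimitiveCollection P := by
  intro S
  induction S using Finset.strongInductionOn with
  | _ S ih =>
    intro hS
    by_cases h : ∀ Q ⊂ S, X.IsCone Q
    · exact ⟨S, Finset.Subset.refl S, hS, h⟩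
    · push_neg at h
      obtain ⟨Q, hQS, hQ⟩ := h
      obtain ⟨P, hPQ, hP⟩ := ih Q hQS hQ
      exact ⟨P, hPQ.trans hQS.subset, hP⟩

private lemma functional_sum (f : (Fin 4 → ℤ) →ₗ[ℤ] ℤ) (v : Fin 4 → ℤ) :
    ∑ k, f (Pi.single k 1) * v k = f v := by
  conv_rhs => rw [← Finset.univ_sum_single v, map_sum]
  refine Finset.sum_congr rfl fun k _ => ?_
  have h : Pi.single k (v k) = v k • (Pi.single k 1 : Fin 4 → ℤ) := by
    rw [← Pi.single_smul, smul_eq_mul, mul_one]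
  rw [h, map_smul, smul_eq_mul, mul_comm]

/-- **Section 5 (f), type `ℳ₅`.** Let `X` be the nonsingular projective toric
4-fold (the nonsingular toric Fano 4-fold of type `ℳ₅`) whose fan `Σ` has
`G(Σ) = {x_1, …, x_8}` and primitive relations `x_1 + x_8 = x_5`,
`x_4 + x_5 = x_7`, `x_6 + x_7 = x_1`, `x_1 + x_2 + x_3 = x_6`,
`x_2 + x_3 + x_5 = x_6 + x_8`, `x_2 + x_3 + x_7 = 0`, `x_4 + x_6 + x_8 = 0`.
Then `X` admits no totally nondegenerate finite morphism from an abelian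
surface.  Rays are indexed from `0`, so `x_k` is `X.gen (k-1)`. -/
theorem no_tnd_morphism_typeM5 (X : ProjToricFourfold 8)
    (hPC : ∀ P : Finset (Fin 8), X.toToricFourfold.IsPrimitiveCollection P ↔
      (P = {0, 7} ∨ P = {3, 4} ∨ P = {5, 6} ∨ P = {0, 1, 2} ∨ P = {1, 2, 4} ∨
        P = {1, 2, 6} ∨ P = {3, 5, 7}))
    (h1 : X.gen 0 + X.gen 7 = X.gen 4)
    (h2 : X.gen 3 + X.gen 4 = X.gen 6)
    (h3 : X.gen 5 + X.gen 6 = X.gen 0)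
    (h4 : X.gen 0 + X.gen 1 + X.gen 2 = X.gen 5)
    (h5 : X.gen 1 + X.gen 2 + X.gen 4 = X.gen 5 + X.gen 7)
    (h6 : X.gen 1 + X.gen 2 + X.gen 6 = 0)
    (h7 : X.gen 3 + X.gen 5 + X.gen 7 = 0) :
    ¬ X.HasTND := by
  rintro ⟨D, instD, A, ⟨φ⟩⟩
  obtain ⟨⟨C, heff, hne, hiz, hprin⟩, hpull⟩ := φ
  -- non-cones from the primitive collections
  have hnc07 : ¬ X.toToricFourfold.IsCone {0, 7} := ((hPC {0, 7}).mpr (Or.inl rfl)).1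
  have hnc34 : ¬ X.toToricFourfold.IsCone {3, 4} :=
    ((hPC {3, 4}).mpr (Or.inr (Or.inl rfl))).1
  have hnc56 : ¬ X.toToricFourfold.IsCone {5, 6} :=
    ((hPC {5, 6}).mpr (Or.inr (Or.inr (Or.inl rfl)))).1
  -- {0,1,3,5} is a cone
  have hcone : X.toToricFourfold.IsCone {0, 1, 3, 5} := by
    by_contra h
    obtain ⟨Q, hQsub, hQpc⟩ := exists_pc_aux X.toToricFourfold _ h
    rcases (hPC Q).mp hQpc with rfl | rfl | rfl | rfl | rfl | rfl | rfl <;>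
      revert hQsub <;> decide
  obtain ⟨b, ι, hinj, hb⟩ := X.toToricFourfold.nonsingular hcone
  have hbij : Function.Bijective ι := by
    rw [Fintype.bijective_iff_injective_and_card]
    exact ⟨hinj, by decide⟩
  set e := Equiv.ofBijective ι hbij with he
  -- the divisor relations coming from principal divisors
  have hbasisrel : ∀ t0 t1 t3 t5 : ℤ,
      t0 • C 0 + t1 • C 1 + (t5 - t0 - t1) • C 2 + t3 • C 3 + (t0 - t3 - t5) • C 4
        + t5 • C 5 + (t0 - t5) • C 6 + (-t3 - t5) • C 7 = 0 := by
    intro t0 t1 t3 t5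
    set val : Fin 8 → ℤ := ![t0, t1, 0, t3, 0, t5, 0, 0] with hval
    set f : (Fin 4 → ℤ) →ₗ[ℤ] ℤ := b.constr ℤ (fun k => val ((e.symm k) : Fin 8))
      with hfdef
    have hf : ∀ (i : Fin 8) (hi : i ∈ ({0, 1, 3, 5} : Finset (Fin 8))),
        f (X.gen i) = val i := by
      intro i hi
      rw [hb ⟨i, hi⟩, hfdef, Module.Basis.constr_basis]
      show val ((e.symm (e ⟨i, hi⟩)) : Fin 8) = val i
      rw [Equiv.symm_apply_apply]
    have hf0 : f (X.gen 0) = t0 := hf 0 (by decide)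
    have hf1 : f (X.gen 1) = t1 := hf 1 (by decide)
    have hf3 : f (X.gen 3) = t3 := hf 3 (by decide)
    have hf5 : f (X.gen 5) = t5 := hf 5 (by decide)
    have hf7 : f (X.gen 7) = -t3 - t5 := by
      have h := congrArg f h7
      rw [map_add, map_add, map_zero, hf3, hf5] at h
      linarith
    have hf4 : f (X.gen 4) = t0 - t3 - t5 := by
      have h := congrArg f h1
      rw [map_add, hf0, hf7] at h
      linarith
    have hf6 : f (X.gen 6) = t0 - t5 := by
      have h := congrArg f h2
      rw [map_add, hf3, hf4] at h
      linarith
    have hf2 : f (X.gen 2) = t5 - t0 - t1 := by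
      have h := congrArg f h4
      rw [map_add, map_add, hf0, hf1, hf5] at h
      linarith
    have hpr := hprin fun k => f (Pi.single k 1)
    simp only [Fin.sum_univ_eight] at hpr
    simp only [functional_sum] at hpr
    rw [hf0, hf1, hf2, hf3, hf4, hf5, hf6, hf7] at hpr
    exact hpr
  -- numerical relations among the intersection numbers
  have rel : ∀ (t0 t1 t3 t5 : ℤ) (j : Fin 8),
      t0 * A.inter (C j) (C 0) + t1 * A.inter (C j) (C 1)
        + (t5 - t0 - t1) * A.inter (C j) (C 2) + t3 * A.inter (C j) (C 3)
        + (t0 - t3 - t5) * A.inter (C j) (C 4) + t5 * A.inter (C j) (C 5)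
        + (t0 - t5) * A.inter (C j) (C 6) + (-t3 - t5) * A.inter (C j) (C 7) = 0 := by
    intro t0 t1 t3 t5 j
    have h := congrArg (A.inter (C j)) (hbasisrel t0 t1 t3 t5)
    simp only [map_add, map_zsmul, map_zero, smul_eq_mul] at h
    linear_combination h
  have r1 : ∀ j, A.inter (C j) (C 1) = A.inter (C j) (C 2) := fun j => by
    have := rel 0 1 0 0 j; linarith
  have r3 : ∀ j, A.inter (C j) (C 3) = A.inter (C j) (C 4) + A.inter (C j) (C 7) :=
    fun j => by have := rel 0 0 1 0 j; linarith
  have r0 : ∀ j, A.inter (C j) (C 0) + A.inter (C j) (C 4) + A.inter (C j) (C 6)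
      = A.inter (C j) (C 2) := fun j => by have := rel 1 0 0 0 j; linarith
  have r5 : ∀ j, A.inter (C j) (C 2) + A.inter (C j) (C 5)
      = A.inter (C j) (C 4) + A.inter (C j) (C 6) + A.inter (C j) (C 7) :=
    fun j => by have := rel 0 0 0 1 j; linarith
  have nonneg : ∀ i j : Fin 8, 0 ≤ A.inter (C i) (C j) := fun i j =>
    A.inter_nonneg_of_effective (heff i) (heff j)
  have sym : ∀ i j : Fin 8, A.inter (C i) (C j) = A.inter (C j) (C i) := fun i j =>
    A.inter_comm _ _
  have z07 : A.inter (C 0) (C 7) = 0 := hiz (by decide) hnc07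
  have z34 : A.inter (C 3) (C 4) = 0 := hiz (by decide) hnc34
  have z56 : A.inter (C 5) (C 6) = 0 := hiz (by decide) hnc56
  have key0 : ∀ i j : Fin 8, A.inter (C i) (C j) = 0 → A.inter (C i) (C i) = 0 := by
    intro i j hij
    by_contra h
    have hpos : 0 < A.inter (C i) (C i) := lt_of_le_of_ne (nonneg i i) (Ne.symm h)
    have hamp := A.ample_of_effective_of_sq_pos (heff i) hpos
    have := A.inter_pos_of_ample hamp (heff j) (hne j)
    linarith
  have z43 : A.inter (C 4) (C 3) = 0 := by rw [sym]; exact z34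
  have h44 : A.inter (C 4) (C 4) = 0 := by
    linarith [r3 4, z43, nonneg 4 4, nonneg 4 7]
  have h47 : A.inter (C 4) (C 7) = 0 := by
    linarith [r3 4, z43, nonneg 4 4, nonneg 4 7]
  have h74 : A.inter (C 7) (C 4) = 0 := by rw [sym]; exact h47
  have h77 : A.inter (C 7) (C 7) = 0 := key0 7 4 h74
  have h00 : A.inter (C 0) (C 0) = 0 := key0 0 7 z07
  have h55 : A.inter (C 5) (C 5) = 0 := key0 5 6 z56
  have h65 : A.inter (C 6) (C 5) = 0 := by rw [sym]; exact z56
  have h66 : A.inter (C 6) (C 6) = 0 := key0 6 5 h65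
  have h70 : A.inter (C 7) (C 0) = 0 := by rw [sym]; exact z07
  -- P 7 2 = P 7 6
  have e76 : A.inter (C 7) (C 2) = A.inter (C 7) (C 6) := by
    linarith [r0 7, h70, h74]
  -- P 6 2 = P 6 4 + P 6 7
  have e62 : A.inter (C 6) (C 2) = A.inter (C 6) (C 4) + A.inter (C 6) (C 7) := by
    linarith [r5 6, h65, h66]
  -- P 4 2 = P 4 6, P 4 0 = 0, P 4 5 = 0
  have h40 : A.inter (C 4) (C 0) = 0 := by
    linarith [r0 4, r5 4, h44, h47, nonneg 4 0, nonneg 4 5]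
  have h45 : A.inter (C 4) (C 5) = 0 := by
    linarith [r0 4, r5 4, h44, h47, nonneg 4 0, nonneg 4 5]
  have e46 : A.inter (C 4) (C 2) = A.inter (C 4) (C 6) := by
    linarith [r0 4, r5 4, h44, h47, nonneg 4 0, nonneg 4 5]
  have h54 : A.inter (C 5) (C 4) = 0 := by rw [sym]; exact h45
  have h04 : A.inter (C 0) (C 4) = 0 := by rw [sym]; exact h40
  -- P 0 6 = P 0 2
  have e06 : A.inter (C 0) (C 6) = A.inter (C 0) (C 2) := by
    linarith [r0 0, h00, h04]
  -- P 6 0 = P 6 7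
  have e60 : A.inter (C 6) (C 0) = A.inter (C 6) (C 7) := by
    linarith [r0 6, e62, h66]
  -- chain of symmetries: P 2 0 = P 2 7
  have e20 : A.inter (C 2) (C 0) = A.inter (C 2) (C 7) := by
    have s1 : A.inter (C 2) (C 0) = A.inter (C 0) (C 2) := sym 2 0
    have s2 : A.inter (C 0) (C 6) = A.inter (C 6) (C 0) := sym 0 6
    have s3 : A.inter (C 6) (C 7) = A.inter (C 7) (C 6) := sym 6 7
    have s4 : A.inter (C 7) (C 2) = A.inter (C 2) (C 7) := sym 7 2
    linarith [e06, e60, e76]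
  -- P 2 5 = 0
  have h25 : A.inter (C 2) (C 5) = 0 := by
    linarith [r5 2, r0 2, e20]
  have h52 : A.inter (C 5) (C 2) = 0 := by rw [sym]; exact h25
  -- P 5 0 = 0
  have h50 : A.inter (C 5) (C 0) = 0 := by
    linarith [r0 5, h54, z56, h52]
  -- P 5 1 = 0
  have h51 : A.inter (C 5) (C 1) = 0 := by
    linarith [r1 5, h52]
  -- P 7 5 = 0 hence P 5 7 = 0
  have h75 : A.inter (C 7) (C 5) = 0 := by
    linarith [r5 7, e76, h74, h77]
  have h57 : A.inter (C 5) (C 7) = 0 := by rw [sym]; exact h75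
  -- P 5 3 = 0
  have h53 : A.inter (C 5) (C 3) = 0 := by
    linarith [r3 5, h54, h57]
  -- the ample divisor gives the contradiction
  obtain ⟨c, hc, hamp⟩ := X.exists_ample
  have hAmp := hpull c hamp
  have hpos := A.inter_pos_of_ample hAmp (heff 5) (hne 5)
  rw [A.inter_comm] at hpos
  have hz : A.inter (C 5) (∑ i, c i • C i) = 0 := by
    rw [map_sum, Fin.sum_univ_eight]
    simp only [map_zsmul, smul_eq_mul]
    rw [h50, h51, h52, h53, h54, h55, z56, h57]
    ring
  linarith
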